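/- Let P(p,q) := ((p → q) → p) → p. Then in every Heyting algebra, (P(p,q) → q) = q; that is, ((((p → q) → p) → p) → q) = q for all elements p, q. -/
import Mathlib


theorem stmt_7 {H : Type*} [HeytingAlgebra H] (p q : H) :
    ((((p ⇨ q) ⇨ p) ⇨ p) ⇨ q) = q := by
  set P := ((p ⇨ q) ⇨ p) ⇨ p with hP
  refine le_antisymm ?_ le_himp
  have h1 : (P ⇨ q) ≤ p ⇨ q := by
    rw [le_himp_iff]
    calc (P ⇨ q) ⊓ p ≤ (P ⇨ q) ⊓ P := inf_le_inf_left _ (by simp [hP])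
      _ ≤ q := himp_inf_le
  have h2 : (P ⇨ q) ≤ P := by
    rw [hP, le_himp_iff]
    calc (P ⇨ q) ⊓ ((p ⇨ q) ⇨ p) ≤ (p ⇨ q) ⊓ ((p ⇨ q) ⇨ p) :=
        inf_le_inf_right _ h1
      _ ≤ p := inf_himp_le
  calc (P ⇨ q) = (P ⇨ q) ⊓ P := (inf_eq_left.2 h2).symm
    _ ≤ q := himp_inf_le
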